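/- Let π be a permutation of {1,...,n} with exactly two distinct fixed points j and j' with 2 ≤ j, j' ≤ n−1, obtained from some permutation π'' of length n−2 by inserting both fixed points. If π'' has k associated complete non-ambiguous trees, then π has at least 4k associated complete non-ambiguous trees. More abstractly as proved via the ASM correspondence: if G is the permutation graph of a permutation with two fixed points inserted, its number of minimal recurrent configurations is at least 4 times that of the original permutation's graph. -/

import Mathlib

/-- An acyclic orientation of a simple graph: each edge gets exactly one direction,
and there are no directed cycles. -/
structure AcyclicOrientation {V : Type*} (G : SimpleGraph V) where
  dir : V → V → Prop
  adj_of_dir : ∀ a b, dir a b → G.Adj a b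
  total : ∀ a b, G.Adj a b → dir a b ∨ dir b a
  asymm : ∀ a b, dir a b → ¬ dir b a
  acyclic : ∀ v, ¬ Relation.TransGen dir v v

/-- `s` is a target: all incident edges are directed towards `s`. -/
def AcyclicOrientation.IsTarget {V : Type*} {G : SimpleGraph V}
    (o : AcyclicOrientation G) (s : V) : Prop :=
  ∀ a, G.Adj a s → o.dir a s

/-- `s` is a source: all incident edges are directed away from `s`. -/
def AcyclicOrientation.IsSource {V : Type*} {G : SimpleGraph V}
    (o : AcyclicOrientation G) (s : V) : Prop :=
  ∀ a, G.Adj s a → o.dir s a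

/-- An `s`-rooted acyclic orientation: `s` is the unique target. -/
def AcyclicOrientation.IsRooted {V : Type*} {G : SimpleGraph V}
    (o : AcyclicOrientation G) (s : V) : Prop :=
  o.IsTarget s ∧ ∀ t, o.IsTarget t → t = s

/-- The number of `s`-rooted acyclic orientations of `G`. -/
noncomputable def rootedCount {V : Type*} (G : SimpleGraph V) (s : V) : ℕ :=
  Nat.card {o : AcyclicOrientation G // o.IsRooted s}

/-- The permutation graph of `π`: vertices are the values, and two values are adjacent
when they form an inversion (the larger value appears before the smaller one,
i.e. at an earlier position). -/
def permGraph (n : ℕ) (π : Equiv.Perm (Fin n)) : SimpleGraph (Fin n) where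
  Adj a b := (b < a ∧ π.symm a < π.symm b) ∨ (a < b ∧ π.symm b < π.symm a)
  symm := ⟨fun a b h => Or.symm h⟩
  loopless := ⟨fun a h => by rcases h with ⟨h, -⟩ | ⟨h, -⟩ <;> exact lt_irrefl _ h⟩

/-- Insert a fixed point at (0-based) position/value `j`, shifting all
positions and values `≥ j` up by one. -/
def insertFix {n : ℕ} (j : Fin (n + 1)) (π : Equiv.Perm (Fin n)) : Equiv.Perm (Fin (n + 1)) :=
  ((finSuccEquiv' j).trans (Equiv.optionCongr π)).trans (finSuccEquiv' j).symm


namespace AcyclicOrientation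

open Relation

variable {V : Type*} {G : SimpleGraph V}

theorem ext' {o o' : AcyclicOrientation G} (h : o.dir = o'.dir) : o = o' := by
  cases o; cases o'; simpa using h

instance [Finite V] : Finite (AcyclicOrientation G) := by
  have : Function.Injective (fun o : AcyclicOrientation G => o.dir) := by
    intro o o' h; exact ext' h
  exact Finite.of_injective _ this

/-- minimal element for a transitive irreflexive relation on a finite type -/
theorem exists_min {β : Type*} [Finite β] (r : β → β → Prop) (hr : Transitive r)
    (hirr : ∀ x, ¬ r x x) (S : Set β) (hS : S.Nonempty) :
    ∃ z ∈ S, ∀ x ∈ S, ¬ r x z := by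
  have h1 : IsTrans β r := ⟨hr⟩
  have h2 : IsIrrefl β r := ⟨hirr⟩
  exact (Finite.wellFounded_of_trans_of_irrefl r).has_min S hS

theorem not_transGen (o : AcyclicOrientation G) {a b : V} (h : TransGen o.dir a b)
    (h' : ReflTransGen o.dir b a) : False := by
  rcases h'.cases_head with heq | ⟨c, hc, hca⟩
  · subst heq
    exact o.acyclic _ h
  · exact o.acyclic _ (h.trans (Relation.TransGen.head' hc hca))

theorem isTarget_iff_no_out (o : AcyclicOrientation G) (s : V) :
    o.IsTarget s ↔ ∀ b, ¬ o.dir s b := by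
  constructor
  · intro h b hb
    exact o.asymm _ _ (h b ((o.adj_of_dir _ _ hb).symm)) hb
  · intro h a ha
    rcases o.total a s ha with h' | h'
    · exact h'
    · exact absurd h' (h a)

theorem isRooted_iff [Finite V] (o : AcyclicOrientation G) (s : V) :
    o.IsRooted s ↔ ∀ v, ReflTransGen o.dir v s := by
  constructor
  · rintro ⟨hs, huniq⟩ v
    have := exists_min (fun a b => TransGen o.dir b a)
      (fun a b c hab hbc => hbc.trans hab) (fun x h => o.acyclic x h)
      {x | ReflTransGen o.dir v x} ⟨v, ReflTransGen.refl⟩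
    rcases this with ⟨z, hz, hmin⟩
    have hzt : o.IsTarget z := by
      intro a ha
      rcases o.total a z ha with h' | h'
      · exact h'
      · exfalso
        exact hmin a (hz.tail h') (TransGen.single h')
    have := huniq z hzt
    subst this
    exact hz
  · intro h
    constructor
    · intro a ha
      rcases o.total a s ha with h' | h'
      · exact h'
      · exfalso
        exact o.not_transGen (TransGen.single h') (h a)
    · intro t ht
      rcases (h t).cases_head with heq | ⟨c, hc, _⟩
      · exact heq
      · exfalso
        exact o.asymm _ _ (ht c ((o.adj_of_dir _ _ hc).symm)) hc

section Flip

variable (o : AcyclicOrientation G) (D : Set V)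

/-- Reverse all edges with both endpoints in `D`. -/
def flipDir : V → V → Prop := fun a b =>
  (a ∈ D ∧ b ∈ D ∧ o.dir b a) ∨ (¬(a ∈ D ∧ b ∈ D) ∧ o.dir a b)

variable {o D}
variable (hD : ∀ a ∈ D, ∀ b, o.dir a b → b ∈ D)

include hD in
theorem flip_m1 {x y : V} (h : ReflTransGen (flipDir o D) x y) (hx : x ∈ D) :
    y ∈ D ∧ ReflTransGen o.dir y x := by
  induction h with
  | refl => exact ⟨hx, ReflTransGen.refl⟩
  | tail hbd hstep ih =>
    rcases ih with ⟨hbD, hpath⟩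
    rcases hstep with ⟨_, hyD, hdir⟩ | ⟨hnot, hdir⟩
    · exact ⟨hyD, ReflTransGen.head hdir hpath⟩
    · exact absurd ⟨hbD, hD _ hbD _ hdir⟩ hnot

include hD in
theorem flip_m2 {x y : V} (h : ReflTransGen (flipDir o D) x y) (hy : y ∉ D) :
    ReflTransGen o.dir x y := by
  induction h with
  | refl => exact ReflTransGen.refl
  | tail hbd hstep ih =>
    rcases hstep with ⟨_, hyD, _⟩ | ⟨hnot, hdir⟩
    · exact absurd hyD hy
    · have hbnot : _ ∉ D := fun hbD => hy (hD _ hbD _ hdir)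
      exact (ih hbnot).tail hdir

include hD in
theorem flip_m3 {a b : V} (h : ReflTransGen o.dir a b) (ha : a ∈ D) :
    b ∈ D ∧ ReflTransGen (flipDir o D) b a := by
  induction h with
  | refl => exact ⟨ha, ReflTransGen.refl⟩
  | tail hac hstep ih =>
    rcases ih with ⟨hcD, hpath⟩
    have hbD := hD _ hcD _ hstep
    exact ⟨hbD, ReflTransGen.head (Or.inl ⟨hbD, hcD, hstep⟩) hpath⟩

include hD in
/-- The flipped orientation. -/
def flip : AcyclicOrientation G where
  dir := flipDir o D
  adj_of_dir := by
    rintro a b (⟨_, _, h⟩ | ⟨_, h⟩)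
    · exact (o.adj_of_dir _ _ h).symm
    · exact o.adj_of_dir _ _ h
  total := by
    intro a b hab
    by_cases hmem : a ∈ D ∧ b ∈ D
    · rcases o.total a b hab with h | h
      · exact Or.inr (Or.inl ⟨hmem.2, hmem.1, h⟩)
      · exact Or.inl (Or.inl ⟨hmem.1, hmem.2, h⟩)
    · rcases o.total a b hab with h | h
      · exact Or.inl (Or.inr ⟨hmem, h⟩)
      · have : ¬ (b ∈ D ∧ a ∈ D) := fun hm => hmem ⟨hm.2, hm.1⟩
        exact Or.inr (Or.inr ⟨this, h⟩)
  asymm := by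
    rintro a b (⟨ha, hb, h⟩ | ⟨hnot, h⟩) (⟨hb', ha', h'⟩ | ⟨hnot', h'⟩)
    · exact o.asymm _ _ h h'
    · exact hnot' ⟨hb, ha⟩
    · exact hnot ⟨ha', hb'⟩
    · exact o.asymm _ _ h h'
  acyclic := by
    intro x hcyc
    rcases Relation.TransGen.head'_iff.mp hcyc with ⟨b, hstep, hpath'⟩
    by_cases hx : x ∈ D
    · rcases hstep with ⟨_, hbD, hdir⟩ | ⟨hnot, hdir⟩
      · exact o.not_transGen (TransGen.single hdir) (flip_m1 hD hpath' hbD).2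
      · exact hnot ⟨hx, hD _ hx _ hdir⟩
    · rcases hstep with ⟨hxD, _, _⟩ | ⟨_, hdir⟩
      · exact hx hxD
      · exact o.not_transGen (TransGen.single hdir) (flip_m2 hD hpath' hx)

theorem flip_dir_eq : (flip hD).dir = flipDir o D := rfl

end Flip

section Reroot

theorem reach_closed (o : AcyclicOrientation G) (s' : V) :
    ∀ a ∈ {x | ReflTransGen o.dir s' x}, ∀ b, o.dir a b → b ∈ {x | ReflTransGen o.dir s' x} :=
  fun _ ha _ hab => ha.tail hab

/-- Re-root the orientation `o` at `s'` by flipping within the reach set of `s'`. -/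
def rerootO (s' : V) (o : AcyclicOrientation G) : AcyclicOrientation G :=
  flip (reach_closed o s')

theorem rerootO_reach (o : AcyclicOrientation G) (s s' : V)
    (ho : ∀ v, ReflTransGen o.dir v s) (y : V) :
    ReflTransGen (rerootO s' o).dir y s' := by
  have hD := reach_closed o s'
  have key : ∀ z, ReflTransGen o.dir z s →
      ReflTransGen (flipDir o {x | ReflTransGen o.dir s' x}) z s' := by
    intro z h
    induction h using ReflTransGen.head_induction_on with
    | refl => exact (flip_m3 hD (ho s') (ReflTransGen.refl : ReflTransGen o.dir s' s')).2
    | @head a c hstep htail ih =>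
      by_cases haD : ReflTransGen o.dir s' a
      · exact (flip_m3 hD haD (ReflTransGen.refl : ReflTransGen o.dir s' s')).2
      · exact ReflTransGen.head (Or.inr ⟨fun hm => haD hm.1, hstep⟩) ih
  exact key y (ho y)

variable [Finite V]

/-- Re-root an `s`-rooted acyclic orientation at `s'`. -/
def reroot (s s' : V) : {o : AcyclicOrientation G // o.IsRooted s} →
    {o : AcyclicOrientation G // o.IsRooted s'} := fun x =>
  ⟨rerootO s' x.1, by
    rw [isRooted_iff]
    exact rerootO_reach x.1 s s' ((x.1.isRooted_iff s).mp x.2)⟩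

theorem reroot_reroot (s s' : V) (x : {o : AcyclicOrientation G // o.IsRooted s}) :
    reroot s' s (reroot s s' x) = x := by
  rcases x with ⟨o, ho⟩
  apply Subtype.ext
  show rerootO s (rerootO s' o) = o
  have hD := reach_closed o s'
  have ho' : ∀ v, ReflTransGen o.dir v s := (o.isRooted_iff s).mp ho
  set o' : AcyclicOrientation G := rerootO s' o with ho'def
  have hdir' : o'.dir = flipDir o {x | ReflTransGen o.dir s' x} := rfl
  have hDD : {x | ReflTransGen o'.dir s x} = {x | ReflTransGen o.dir s' x} := by
    ext z
    simp only [Set.mem_setOf_eq]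
    constructor
    · intro hz
      rw [hdir'] at hz
      exact (flip_m1 hD hz (ho' s')).1
    · intro hz
      rw [hdir']
      exact (flip_m3 hD (ho' z) hz).2
  apply ext'
  funext a b
  apply propext
  show flipDir o' {x | ReflTransGen o'.dir s x} a b ↔ o.dir a b
  rw [hDD]
  constructor
  · intro h
    rcases h with ⟨ha, hb, h2⟩ | ⟨hnot, h2⟩ <;> rw [hdir'] at h2 <;>
      simp only [flipDir] at h2
    · rcases h2 with ⟨_, _, h3⟩ | ⟨hnot2, _⟩
      · exact h3
      · exact absurd ⟨hb, ha⟩ hnot2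
    · rcases h2 with ⟨ha', hb', _⟩ | ⟨_, h3⟩
      · exact absurd ⟨ha', hb'⟩ hnot
      · exact h3
  · intro h
    by_cases hmem : a ∈ {x | ReflTransGen o.dir s' x} ∧ b ∈ {x | ReflTransGen o.dir s' x}
    · refine Or.inl ⟨hmem.1, hmem.2, ?_⟩
      rw [hdir']
      exact Or.inl ⟨hmem.2, hmem.1, h⟩
    · refine Or.inr ⟨hmem, ?_⟩
      rw [hdir']
      exact Or.inr ⟨hmem, h⟩

theorem rootedCount_eq (G : SimpleGraph V) (s s' : V) :
    rootedCount G s = rootedCount G s' := by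
  apply Nat.card_eq_of_bijective (reroot s s')
  exact Function.bijective_iff_has_inverse.mpr
    ⟨reroot s' s, reroot_reroot s s', reroot_reroot s' s⟩

end Reroot

end AcyclicOrientation

namespace AcyclicOrientation

open Relation

section Transport

variable {V W : Type*} {G : SimpleGraph V} {H : SimpleGraph W}

/-- Transport an acyclic orientation along a graph equivalence. -/
def mapO (f : V ≃ W) (h : ∀ a b, G.Adj a b ↔ H.Adj (f a) (f b))
    (o : AcyclicOrientation G) : AcyclicOrientation H where
  dir a b := o.dir (f.symm a) (f.symm b)
  adj_of_dir a b hd := by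
    have h1 := o.adj_of_dir _ _ hd
    have h2 := (h _ _).mp h1
    simpa using h2
  total a b hab := o.total _ _ ((h _ _).mpr (by simpa using hab))
  asymm a b h1 h2 := o.asymm _ _ h1 h2
  acyclic x hc := o.acyclic (f.symm x) (TransGen.lift f.symm (fun _ _ hd => hd) _ _ hc)

theorem mapO_rooted (f : V ≃ W) (h : ∀ a b, G.Adj a b ↔ H.Adj (f a) (f b))
    (o : AcyclicOrientation G) (s : V) (ho : o.IsRooted s) :
    (mapO f h o).IsRooted (f s) := by
  constructor
  · intro a ha
    show o.dir (f.symm a) (f.symm (f s))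
    rw [Equiv.symm_apply_apply]
    apply ho.1
    apply (h (f.symm a) s).mpr
    simpa using ha
  · intro w hw
    have htar : o.IsTarget (f.symm w) := by
      intro a ha
      have hadj : H.Adj (f a) w := by
        have := (h a (f.symm w)).mp ha
        simpa using this
      have h2 : o.dir (f.symm (f a)) (f.symm w) := hw (f a) hadj
      simpa using h2
    have := ho.2 _ htar
    rw [← this]
    simp

theorem rootedCount_map (f : V ≃ W) (G : SimpleGraph V) (H : SimpleGraph W)
    (h : ∀ a b, G.Adj a b ↔ H.Adj (f a) (f b)) (s : V) :
    rootedCount G s = rootedCount H (f s) := by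
  have h' : ∀ a b, H.Adj a b ↔ G.Adj (f.symm a) (f.symm b) := by
    intro a b
    rw [h]
    simp
  apply Nat.card_congr
  refine ⟨fun x => ⟨mapO f h x.1, mapO_rooted f h x.1 s x.2⟩,
          fun y => ⟨mapO f.symm h' y.1, ?_⟩, ?_, ?_⟩
  · have := mapO_rooted f.symm h' y.1 (f s) y.2
    simpa using this
  · intro x
    apply Subtype.ext
    apply ext'
    funext a b
    show x.1.dir (f.symm (f a)) (f.symm (f b)) = x.1.dir a b
    simp
  · intro y
    apply Subtype.ext
    apply ext'
    funext a b
    show y.1.dir (f (f.symm a)) (f (f.symm b)) = y.1.dir a b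
    simp

end Transport

section Doubling

variable {V : Type*} {Gp : SimpleGraph V} {v : V}

/-- Extend an orientation of `Gp - v` to `Gp`: if `ε = false`, `v` becomes a source;
if `ε = true`, the single edge from `u` enters `v`. -/
def extDir (o : AcyclicOrientation (Gp.comap (Subtype.val : {x : V // x ≠ v} → V)))
    (u : {x : V // x ≠ v}) (ε : Bool) : V → V → Prop := fun a b =>
  (∃ (ha : a ≠ v) (hb : b ≠ v), o.dir ⟨a, ha⟩ ⟨b, hb⟩) ∨
  (a = v ∧ Gp.Adj v b ∧ (ε = true → b ≠ ↑u)) ∨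
  (b = v ∧ ε = true ∧ a = ↑u ∧ Gp.Adj a v)

variable {o : AcyclicOrientation (Gp.comap (Subtype.val : {x : V // x ≠ v} → V))}
  {u : {x : V // x ≠ v}} {ε : Bool}

theorem extDir_restrict (a b : {x : V // x ≠ v}) :
    extDir o u ε ↑a ↑b ↔ o.dir a b := by
  constructor
  · rintro (⟨ha, hb, hd⟩ | ⟨hav, -⟩ | ⟨hbv, -⟩)
    · exact hd
    · exact absurd hav a.2
    · exact absurd hbv b.2
  · intro hd
    exact Or.inl ⟨a.2, b.2, hd⟩

theorem ext_path {x : V} (hx : x ≠ v) {y : V}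
    (h : ReflTransGen (extDir o u ε) x y) :
    (y = v → ε = true ∧ ReflTransGen o.dir ⟨x, hx⟩ u) ∧
    (∀ hy : y ≠ v, ReflTransGen o.dir ⟨x, hx⟩ ⟨y, hy⟩ ∨
      (ε = true ∧ ReflTransGen o.dir ⟨x, hx⟩ u ∧
        ∃ c, ∃ hc : c ≠ v, (Gp.Adj v c ∧ c ≠ ↑u) ∧ ReflTransGen o.dir ⟨c, hc⟩ ⟨y, hy⟩)) := by
  induction h with
  | refl =>
    exact ⟨fun hxv => absurd hxv hx, fun hy => Or.inl ReflTransGen.refl⟩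
  | @tail b y hxb hstep ih =>
    rcases hstep with ⟨hb', hy', hdir⟩ | ⟨hbv, hAdj, hcond⟩ | ⟨hyv, hε, hbu, hAdjbv⟩
    · refine ⟨fun hyv => absurd hyv hy', fun hy => ?_⟩
      rcases ih.2 hb' with hp | ⟨hε, hxu, c, hc, hcp, hcb⟩
      · exact Or.inl (hp.tail hdir)
      · exact Or.inr ⟨hε, hxu, c, hc, hcp, hcb.tail hdir⟩
    · obtain ⟨hε, hxu⟩ := ih.1 hbv
      refine ⟨fun hyv => absurd (hyv ▸ hAdj) (Gp.loopless.irrefl v), fun hy => ?_⟩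
      exact Or.inr ⟨hε, hxu, y, hy, ⟨hAdj, hcond hε⟩, ReflTransGen.refl⟩
    · have hb' : b ≠ v := fun hbv => u.2 (hbu ▸ hbv)
      refine ⟨fun _ => ⟨hε, ?_⟩, fun hy => absurd hyv hy⟩
      have hbeq : (⟨b, hb'⟩ : {x : V // x ≠ v}) = u := Subtype.ext hbu
      rcases ih.2 hb' with hp | ⟨-, hxu, -⟩
      · exact hbeq ▸ hp
      · exact hxu

/-- The extended orientation. -/
def extend (hadj : Gp.Adj ↑u v)
    (hmin : ∀ x : {x : V // x ≠ v}, Gp.Adj ↑x v → ¬ TransGen o.dir x u) :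
    AcyclicOrientation Gp where
  dir := extDir o u ε
  adj_of_dir := by
    rintro a b (⟨ha, hb, hd⟩ | ⟨hav, hAdj, -⟩ | ⟨hbv, -, -, hAdj⟩)
    · exact o.adj_of_dir _ _ hd
    · exact hav ▸ hAdj
    · exact hbv ▸ hAdj
  total := by
    intro a b hab
    by_cases hav : a = v
    · cases ε with
      | false => exact Or.inl (Or.inr (Or.inl ⟨hav, hav ▸ hab, by simp⟩))
      | true =>
        by_cases hbu : b = ↑u
        · exact Or.inr (Or.inr (Or.inr ⟨hav, rfl, hbu, hav ▸ hab.symm⟩))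
        · exact Or.inl (Or.inr (Or.inl ⟨hav, hav ▸ hab, fun _ => hbu⟩))
    · by_cases hbv : b = v
      · cases ε with
        | false => exact Or.inr (Or.inr (Or.inl ⟨hbv, hbv ▸ hab.symm, by simp⟩))
        | true =>
          by_cases hau : a = ↑u
          · exact Or.inl (Or.inr (Or.inr ⟨hbv, rfl, hau, hbv ▸ hab⟩))
          · exact Or.inr (Or.inr (Or.inl ⟨hbv, hbv ▸ hab.symm, fun _ => hau⟩))
      · rcases o.total ⟨a, hav⟩ ⟨b, hbv⟩ hab with h | h
        · exact Or.inl (Or.inl ⟨hav, hbv, h⟩)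
        · exact Or.inr (Or.inl ⟨hbv, hav, h⟩)
  asymm := by
    rintro a b (⟨ha, hb, hd⟩ | ⟨hav, hAdj, hcond⟩ | ⟨hbv, hε, hau, hAdj⟩)
      (⟨hb', ha', hd'⟩ | ⟨hbv', hAdj', hcond'⟩ | ⟨hav', hε', hbu', hAdj'⟩)
    · exact o.asymm _ _ hd hd'
    · exact hb hbv'
    · exact ha hav'
    · exact ha' hav
    · exact Gp.loopless.irrefl v (hbv' ▸ hAdj)
    · exact (hcond hε') hbu'
    · exact hb' hbv
    · exact (hcond' hε) hau
    · exact u.2 (hau ▸ hav')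
  acyclic := by
    intro z hcyc
    rcases TransGen.head'_iff.mp hcyc with ⟨b, hstep, hpath⟩
    by_cases hz : z = v
    · rcases hstep with ⟨ha, -, -⟩ | ⟨-, hAdj, hcond⟩ | ⟨-, -, hvu, -⟩
      · exact ha hz
      · have hAdj' : Gp.Adj v b := hz ▸ hAdj
        have hb' : b ≠ v := fun h => Gp.loopless.irrefl v (h ▸ hAdj')
        have hpath' : ReflTransGen (extDir o u ε) b v := hz ▸ hpath
        obtain ⟨hε, hbu⟩ := (ext_path hb' hpath').1 rfl
        have hne : (⟨b, hb'⟩ : {x : V // x ≠ v}) ≠ u :=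
          fun h => (hcond hε) (congrArg Subtype.val h)
        rcases Relation.reflTransGen_iff_eq_or_transGen.mp hbu with heq | htg
        · exact hne heq.symm
        · exact hmin ⟨b, hb'⟩ hAdj'.symm htg
      · exact u.2 (hvu ▸ hz)
    · rcases hstep with ⟨hz', hb', hdir⟩ | ⟨hzv, -, -⟩ | ⟨hbv, hε, hzu, hAdjzv⟩
      · rcases (ext_path hb' hpath).2 hz with hp | ⟨hε, hbu, c, hc, ⟨hAdjvc, hcu⟩, hcz⟩
        · exact o.not_transGen (TransGen.single hdir) hp
        · have hcu' : ReflTransGen o.dir ⟨c, hc⟩ u := (hcz.tail hdir).trans hbu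
          have hne : (⟨c, hc⟩ : {x : V // x ≠ v}) ≠ u := fun h => hcu (congrArg Subtype.val h)
          rcases Relation.reflTransGen_iff_eq_or_transGen.mp hcu' with heq | htg
          · exact hne heq.symm
          · exact hmin ⟨c, hc⟩ hAdjvc.symm htg
      · exact hz hzv
      · have hpath' : ReflTransGen (extDir o u ε) v z := hbv ▸ hpath
        rcases hpath'.cases_head with heq | ⟨c, hstep2, hpath2⟩
        · exact hz heq.symm
        · rcases hstep2 with ⟨hv', -, -⟩ | ⟨-, hAdjvc, hcond⟩ | ⟨-, -, hvu, -⟩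
          · exact hv' rfl
          · have hc' : c ≠ v := fun h => Gp.loopless.irrefl v (h ▸ hAdjvc)
            have hcuv : c ≠ (↑u : V) := hcond hε
            have hzu' : (⟨z, hz⟩ : {x : V // x ≠ v}) = u := Subtype.ext hzu
            have hcz : ReflTransGen o.dir ⟨c, hc'⟩ u := by
              rcases (ext_path hc' hpath2).2 hz with hp | ⟨-, hcuu, -⟩
              · exact hzu' ▸ hp
              · exact hcuu
            have hne : (⟨c, hc'⟩ : {x : V // x ≠ v}) ≠ u := fun h => hcuv (congrArg Subtype.val h)
            rcases Relation.reflTransGen_iff_eq_or_transGen.mp hcz with heq | htg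
            · exact hne heq.symm
            · exact hmin ⟨c, hc'⟩ hAdjvc.symm htg
          · exact u.2 hvu.symm

theorem extend_rooted [Finite V] {t : V} (ht : t ≠ v) (hadj : Gp.Adj ↑u v)
    (hmin : ∀ x : {x : V // x ≠ v}, Gp.Adj ↑x v → ¬ TransGen o.dir x u)
    (ho : o.IsRooted ⟨t, ht⟩)
    (hw : ∃ w : {x : V // x ≠ v}, Gp.Adj v ↑w ∧ (ε = true → (↑w : V) ≠ ↑u)) :
    (extend (o := o) (u := u) (ε := ε) hadj hmin).IsRooted t := by
  rw [isRooted_iff]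
  have hlift : ∀ {a b : {x : V // x ≠ v}}, ReflTransGen o.dir a b →
      ReflTransGen (extDir o u ε) ↑a ↑b := fun h =>
    ReflTransGen.lift (p := extDir o u ε) Subtype.val (fun a b hd => Or.inl ⟨a.2, b.2, hd⟩) _ _ h
  have hall := (o.isRooted_iff ⟨t, ht⟩).mp ho
  intro z
  by_cases hz : z = v
  · obtain ⟨w, hwadj, hwcond⟩ := hw
    have hstep : extDir o u ε z ↑w := Or.inr (Or.inl ⟨hz, hz ▸ hwadj, hwcond⟩)
    exact ReflTransGen.head hstep (hlift (hall w))
  · exact hlift (hall ⟨z, hz⟩)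

theorem not_extDir_true : ¬ extDir o u true v ↑u := by
  rintro (⟨ha, -, -⟩ | ⟨-, -, hcond⟩ | ⟨huv, -, -, -⟩)
  · exact ha rfl
  · exact hcond rfl rfl
  · exact u.2 huv

theorem two_mul_le [Finite V] (Gp : SimpleGraph V) (v t : V) (ht : t ≠ v)
    (hne : ∃ w, Gp.Adj w v)
    (htwo : ∀ w, Gp.Adj w v → ∃ w', Gp.Adj w' v ∧ w' ≠ w) :
    2 * rootedCount (Gp.comap (Subtype.val : {x : V // x ≠ v} → V)) ⟨t, ht⟩
      ≤ rootedCount Gp t := by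
  classical
  set V' := {x : V // x ≠ v}
  set G : SimpleGraph V' := Gp.comap (Subtype.val : V' → V) with hGdef
  have hex : ∀ o : AcyclicOrientation G, ∃ z : V', Gp.Adj ↑z v ∧
      ∀ x : V', Gp.Adj ↑x v → ¬ TransGen o.dir x z := by
    intro o
    obtain ⟨w, hw⟩ := hne
    obtain ⟨z, hz, hmin⟩ := exists_min (fun a b : V' => TransGen o.dir a b)
      (fun a b c hab hbc => hab.trans hbc) (fun x h => o.acyclic x h)
      {u : V' | Gp.Adj ↑u v} ⟨⟨w, hw.ne⟩, hw⟩
    exact ⟨z, hz, fun x hx => hmin x hx⟩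
  set us : AcyclicOrientation G → V' := fun o => (hex o).choose with husdef
  have husadj : ∀ o, Gp.Adj ↑(us o) v := fun o => (hex o).choose_spec.1
  have husmin : ∀ o, ∀ x : V', Gp.Adj ↑x v → ¬ TransGen o.dir x (us o) :=
    fun o => (hex o).choose_spec.2
  have hwit : ∀ (o : AcyclicOrientation G) (ε : Bool),
      ∃ w : V', Gp.Adj v ↑w ∧ (ε = true → (↑w : V) ≠ ↑(us o)) := by
    intro o ε
    cases ε with
    | false => exact ⟨us o, (husadj o).symm, fun h => Bool.noConfusion h⟩
    | true =>
      obtain ⟨w', hw'adj, hw'ne⟩ := htwo ↑(us o) (husadj o)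
      exact ⟨⟨w', hw'adj.ne⟩, hw'adj.symm, fun _ => hw'ne⟩
  set F : {o : AcyclicOrientation G // o.IsRooted ⟨t, ht⟩} × Bool →
      {O : AcyclicOrientation Gp // O.IsRooted t} := fun p =>
    ⟨extend (ε := p.2) (husadj p.1.1) (husmin p.1.1),
     extend_rooted ht (husadj p.1.1) (husmin p.1.1) p.1.2 (hwit p.1.1 p.2)⟩ with hFdef
  have hinj : Function.Injective F := by
    intro p q hpq
    have hdir : extDir p.1.1 (us p.1.1) p.2 = extDir q.1.1 (us q.1.1) q.2 :=
      congrArg (fun x => x.1.dir) hpq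
    have hoo : p.1.1 = q.1.1 := by
      apply ext'
      funext a b
      apply propext
      constructor
      · intro hd
        exact (extDir_restrict a b).mp (by rw [← hdir]; exact (extDir_restrict a b).mpr hd)
      · intro hd
        exact (extDir_restrict a b).mp (by rw [hdir]; exact (extDir_restrict a b).mpr hd)
    have hsub : p.1 = q.1 := Subtype.ext hoo
    have hee : p.2 = q.2 := by
      by_contra hne'
      have hval : extDir p.1.1 (us p.1.1) p.2 v ↑(us p.1.1)
          ↔ extDir q.1.1 (us q.1.1) q.2 v ↑(us q.1.1) := by
        rw [hdir, hoo]
      rcases Bool.eq_false_or_eq_true p.2 with hp2 | hp2 <;>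
        rcases Bool.eq_false_or_eq_true q.2 with hq2 | hq2
      · exact hne' (hp2.trans hq2.symm)
      · rw [hp2, hq2] at hval
        rw [hoo] at hval
        exact not_extDir_true (hval.mpr
          (Or.inr (Or.inl ⟨rfl, (husadj q.1.1).symm, fun h => Bool.noConfusion h⟩)))
      · rw [hp2, hq2] at hval
        rw [hoo] at hval
        exact not_extDir_true (hval.mp
          (Or.inr (Or.inl ⟨rfl, (husadj q.1.1).symm, fun h => Bool.noConfusion h⟩)))
      · exact hne' (hp2.trans hq2.symm)
    exact Prod.ext hsub hee
  have hcard := Nat.card_le_card_of_injective F hinj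
  rw [Nat.card_prod] at hcard
  have hb2 : Nat.card Bool = 2 := by simp [Nat.card_eq_fintype_card]
  rw [hb2, mul_comm] at hcard
  exact hcard

end Doubling

section Split

variable {V : Type*} [Finite V] {G : SimpleGraph V}

theorem split_absurd (o : AcyclicOrientation G) {s : V} (ho : o.IsRooted s) (A : Set V)
    (hcross : ∀ x ∈ A, ∀ y, y ∉ A → ¬ G.Adj x y) {a b : V} (ha : a ∈ A) (hb : b ∉ A) :
    False := by
  have hreach := (o.isRooted_iff s).mp ho
  have hfwd : ∀ {x y : V}, ReflTransGen o.dir x y → x ∈ A → y ∈ A := by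
    intro x y h hx
    induction h with
    | refl => exact hx
    | tail hxb hstep ih =>
      by_contra hy
      exact hcross _ ih _ hy (o.adj_of_dir _ _ hstep)
  have hbwd : ∀ {x y : V}, ReflTransGen o.dir x y → x ∉ A → y ∉ A := by
    intro x y h hx
    induction h with
    | refl => exact hx
    | tail hxb hstep ih =>
      intro hy
      exact hcross _ hy _ ih ((o.adj_of_dir _ _ hstep).symm)
  exact hbwd (hreach b) hb (hfwd (hreach a) ha)

end Split

end AcyclicOrientation

section PermLemmas

open Relation

variable {n : ℕ}

theorem permGraph_adj (σ : Equiv.Perm (Fin n)) (a b : Fin n) :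
    (permGraph n σ).Adj a b ↔
      ((b < a ∧ σ.symm a < σ.symm b) ∨ (a < b ∧ σ.symm b < σ.symm a)) := Iff.rfl

theorem succAbove_val (c : Fin (n+1)) (x : Fin n) :
    ((c.succAbove x : Fin (n+1)) : ℕ) = if (x:ℕ) < (c:ℕ) then (x:ℕ) else (x:ℕ)+1 := by
  rcases lt_or_ge (x.castSucc) c with h | h
  · rw [Fin.succAbove_of_castSucc_lt _ _ h]
    simp only [Fin.lt_def, Fin.coe_castSucc] at h
    simp [h]
  · rw [Fin.succAbove_of_le_castSucc _ _ h]
    have h' : ¬ ((x:ℕ) < (c:ℕ)) := by simpa [Fin.le_def] using h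
    simp [h']

theorem insertFix_apply_succAbove (c : Fin (n+1)) (σ : Equiv.Perm (Fin n)) (x : Fin n) :
    insertFix c σ (c.succAbove x) = c.succAbove (σ x) := by
  simp [insertFix, finSuccEquiv'_succAbove]

theorem insertFix_apply_self (c : Fin (n+1)) (σ : Equiv.Perm (Fin n)) :
    insertFix c σ c = c := by
  simp [insertFix]

theorem insertFix_symm_apply_succAbove (c : Fin (n+1)) (σ : Equiv.Perm (Fin n)) (x : Fin n) :
    (insertFix c σ).symm (c.succAbove x) = c.succAbove (σ.symm x) := by
  rw [Equiv.symm_apply_eq, insertFix_apply_succAbove, Equiv.apply_symm_apply]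

theorem insertFix_symm_apply_self (c : Fin (n+1)) (σ : Equiv.Perm (Fin n)) :
    (insertFix c σ).symm c = c := by
  rw [Equiv.symm_apply_eq, insertFix_apply_self]

theorem permGraph_adj_succAbove (c : Fin (n+1)) (σ : Equiv.Perm (Fin n)) (x y : Fin n) :
    (permGraph n σ).Adj x y ↔
      (permGraph (n+1) (insertFix c σ)).Adj (c.succAbove x) (c.succAbove y) := by
  rw [permGraph_adj, permGraph_adj, insertFix_symm_apply_succAbove,
    insertFix_symm_apply_succAbove, Fin.succAbove_lt_succAbove_iff,
    Fin.succAbove_lt_succAbove_iff, Fin.succAbove_lt_succAbove_iff,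
    Fin.succAbove_lt_succAbove_iff]

theorem permGraph_cross {N : ℕ} (ρ : Equiv.Perm (Fin N)) (c : Fin N) (hc : ρ.symm c = c)
    {a b : Fin N} (hac : a < c) (hcb : c < b) (hadj : (permGraph N ρ).Adj a b) :
    ∃ w, (permGraph N ρ).Adj w c := by
  rw [permGraph_adj] at hadj
  rcases hadj with ⟨hlt, -⟩ | ⟨-, hpos⟩
  · exact absurd hlt (not_lt.mpr (hac.trans hcb).le)
  · have hρc : ρ c = c := by
      conv_lhs => rw [← hc]
      rw [Equiv.apply_symm_apply]
    rcases lt_trichotomy (ρ.symm b) c with h | h | h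
    · refine ⟨b, ?_⟩
      rw [permGraph_adj]
      exact Or.inl ⟨hcb, by rw [hc]; exact h⟩
    · exfalso
      have hbc : b = c := by
        have := congrArg ρ h
        rwa [Equiv.apply_symm_apply, hρc] at this
      exact absurd hbc (ne_of_gt hcb)
    · refine ⟨a, ?_⟩
      rw [permGraph_adj]
      exact Or.inr ⟨hac, by rw [hc]; exact h.trans hpos⟩

theorem permGraph_nbr {N : ℕ} (ρ : Equiv.Perm (Fin N)) (c : Fin N) (hc : ρ.symm c = c)
    (w : Fin N) (hw : (permGraph N ρ).Adj w c) :
    ∃ w', (permGraph N ρ).Adj w' c ∧ w' ≠ w := by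
  classical
  have hρc : ρ c = c := by
    conv_lhs => rw [← hc]
    rw [Equiv.apply_symm_apply]
  rw [permGraph_adj] at hw
  rcases hw with ⟨hlt, hpos⟩ | ⟨hlt, hpos⟩
  · rw [hc] at hpos
    set Q : Finset (Fin N) := Finset.univ.filter (· < c) with hQ
    have hwQ : w ∈ Q.image ρ :=
      Finset.mem_image.mpr ⟨ρ.symm w, by simp [hQ, hpos], by simp⟩
    have hwnQ : w ∉ Q := by simp [hQ, not_lt.mpr hlt.le]
    have hcard : (Q.image ρ).card = Q.card := Finset.card_image_of_injective _ ρ.injective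
    have hex : ∃ q ∈ Q, q ∉ Q.image ρ := by
      by_contra hall
      push_neg at hall
      have : Q = Q.image ρ := Finset.eq_of_subset_of_card_le hall (le_of_eq hcard)
      rw [← this] at hwQ
      exact hwnQ hwQ
    obtain ⟨q, hqQ, hqn⟩ := hex
    have hq1 : q < c := by simpa [hQ] using hqQ
    have hq2 : ¬ ρ.symm q < c := by
      intro hlt2
      exact hqn (Finset.mem_image.mpr ⟨ρ.symm q, by simp [hQ, hlt2], by simp⟩)
    have hq3 : ρ.symm q ≠ c := by
      intro he
      have hqc : q = c := by
        have := congrArg ρ he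
        rwa [Equiv.apply_symm_apply, hρc] at this
      exact absurd hqc (ne_of_lt hq1)
    have hq4 : c < ρ.symm q := lt_of_le_of_ne (not_lt.mp hq2) (Ne.symm hq3)
    refine ⟨q, ?_, ne_of_lt (hq1.trans hlt)⟩
    rw [permGraph_adj]
    exact Or.inr ⟨hq1, by rw [hc]; exact hq4⟩
  · rw [hc] at hpos
    set Q : Finset (Fin N) := Finset.univ.filter (c < ·) with hQ
    have hwQ : w ∈ Q.image ρ :=
      Finset.mem_image.mpr ⟨ρ.symm w, by simp [hQ, hpos], by simp⟩
    have hwnQ : w ∉ Q := by simp [hQ, not_lt.mpr hlt.le]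
    have hcard : (Q.image ρ).card = Q.card := Finset.card_image_of_injective _ ρ.injective
    have hex : ∃ q ∈ Q, q ∉ Q.image ρ := by
      by_contra hall
      push_neg at hall
      have : Q = Q.image ρ := Finset.eq_of_subset_of_card_le hall (le_of_eq hcard)
      rw [← this] at hwQ
      exact hwnQ hwQ
    obtain ⟨q, hqQ, hqn⟩ := hex
    have hq1 : c < q := by simpa [hQ] using hqQ
    have hq2 : ¬ c < ρ.symm q := by
      intro hlt2
      exact hqn (Finset.mem_image.mpr ⟨ρ.symm q, by simp [hQ, hlt2], by simp⟩)
    have hq3 : ρ.symm q ≠ c := by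
      intro he
      have hqc : q = c := by
        have := congrArg ρ he
        rwa [Equiv.apply_symm_apply, hρc] at this
      exact absurd hqc (ne_of_gt hq1)
    have hq4 : ρ.symm q < c := lt_of_le_of_ne (not_lt.mp hq2) hq3
    refine ⟨q, ?_, ne_of_gt (hlt.trans hq1)⟩
    rw [permGraph_adj]
    exact Or.inl ⟨hq1, by rw [hc]; exact hq4⟩

end PermLemmas

open Relation AcyclicOrientation in
theorem insert_two_fixed_points_quadruples (m : ℕ) (π'' : Equiv.Perm (Fin m))
    (hfix : ∀ i, π'' i ≠ i) (j : Fin (m + 2)) (j' : Fin (m + 1))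
    (hj1 : 1 ≤ (j : ℕ)) (hj2 : (j : ℕ) ≤ m)
    (hj'1 : 1 ≤ (j' : ℕ)) (hj'2 : (j' : ℕ) + 1 ≤ m)
    (s : Fin (m + 2)) (s'' : Fin m) :
    4 * rootedCount (permGraph m π'') s'' ≤
      rootedCount (permGraph (m + 2) (insertFix j (insertFix j' π''))) s := by
  classical
  set σ' : Equiv.Perm (Fin (m+1)) := insertFix j' π'' with hσ'
  set τ : Equiv.Perm (Fin (m+2)) := insertFix j σ' with hτ
  by_cases h0 : rootedCount (permGraph m π'') s'' = 0
  · rw [h0]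
    simpa using Nat.zero_le _
  · have hm2 : 2 ≤ m := by omega
    have hnon : Nonempty {o : AcyclicOrientation (permGraph m π'') // o.IsRooted s''} := by
      have : Nat.card {o : AcyclicOrientation (permGraph m π'') // o.IsRooted s''} ≠ 0 := h0
      exact (Nat.card_ne_zero.mp this).1
    obtain ⟨o'', ho''⟩ := hnon
    have hsymm' : σ'.symm j' = j' := insertFix_symm_apply_self j' π''
    have hsymmτ : τ.symm j = j := insertFix_symm_apply_self j σ'
    have hAdj1 : ∀ x y, (permGraph m π'').Adj x y ↔
        (permGraph (m+1) σ').Adj (j'.succAbove x) (j'.succAbove y) :=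
      fun x y => permGraph_adj_succAbove j' π'' x y
    have hAdj2 : ∀ x y, (permGraph (m+1) σ').Adj x y ↔
        (permGraph (m+2) τ).Adj (j.succAbove x) (j.succAbove y) :=
      fun x y => permGraph_adj_succAbove j σ' x y
    -- vertices witnessing both sides of the splits
    have hm0 : 0 < m := by omega
    have hm1 : m - 1 < m := by omega
    set x₀ : Fin m := ⟨0, hm0⟩ with hx₀
    set x₁ : Fin m := ⟨m - 1, hm1⟩ with hx₁
    -- degree conditions at j'
    have hne1 : ∃ w, (permGraph (m+1) σ').Adj w j' := by
      by_contra hno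
      push_neg at hno
      refine split_absurd o'' ho'' {x : Fin m | (x : ℕ) < (j' : ℕ)} ?_
        (a := x₀) (b := x₁) ?_ ?_
      · intro x hx y hy hadj
        have hx' : (x : ℕ) < (j' : ℕ) := hx
        have hy' : ¬ (y : ℕ) < (j' : ℕ) := hy
        have hadj' := (hAdj1 x y).mp hadj
        have hlt1 : j'.succAbove x < j' := by
          rw [Fin.lt_def, succAbove_val]
          simpa [hx'] using hx'
        have hlt2 : j' < j'.succAbove y := by
          rw [Fin.lt_def, succAbove_val]
          simp [hy']
          omega
        obtain ⟨w, hw⟩ := permGraph_cross σ' j' hsymm' hlt1 hlt2 hadj'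
        exact hno w hw
      · show (x₀ : ℕ) < (j' : ℕ)
        exact hj'1
      · show ¬ (x₁ : ℕ) < (j' : ℕ)
        simp [hx₁]
        omega
    have htwo1 : ∀ w, (permGraph (m+1) σ').Adj w j' →
        ∃ w', (permGraph (m+1) σ').Adj w' j' ∧ w' ≠ w :=
      fun w hw => permGraph_nbr σ' j' hsymm' w hw
    -- degree conditions at j
    have hne2 : ∃ w, (permGraph (m+2) τ).Adj w j := by
      by_contra hno
      push_neg at hno
      refine split_absurd o'' ho''
        {x : Fin m | ((j'.succAbove x : Fin (m+1)) : ℕ) < (j : ℕ)} ?_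
        (a := x₀) (b := x₁) ?_ ?_
      · intro x hx y hy hadj
        have hx' : ((j'.succAbove x : Fin (m+1)) : ℕ) < (j : ℕ) := hx
        have hy' : ¬ ((j'.succAbove y : Fin (m+1)) : ℕ) < (j : ℕ) := hy
        have hadj' := (hAdj2 _ _).mp ((hAdj1 x y).mp hadj)
        have hlt1 : j.succAbove (j'.succAbove x) < j := by
          rw [Fin.lt_def, succAbove_val]
          simpa [hx'] using hx'
        have hlt2 : j < j.succAbove (j'.succAbove y) := by
          rw [Fin.lt_def, succAbove_val]
          simp [hy']
          omega
        obtain ⟨w, hw⟩ := permGraph_cross τ j hsymmτ hlt1 hlt2 hadj'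
        exact hno w hw
      · show ((j'.succAbove x₀ : Fin (m+1)) : ℕ) < (j : ℕ)
        rw [succAbove_val]
        have : (x₀ : ℕ) < (j' : ℕ) := by exact hj'1
        rw [if_pos this]
        exact hj1
      · show ¬ ((j'.succAbove x₁ : Fin (m+1)) : ℕ) < (j : ℕ)
        rw [succAbove_val]
        have : ¬ (x₁ : ℕ) < (j' : ℕ) := by simp [hx₁]; omega
        rw [if_neg this]; show ¬ (m - 1 + 1 < (j:ℕ))
        omega
    have htwo2 : ∀ w, (permGraph (m+2) τ).Adj w j →
        ∃ w', (permGraph (m+2) τ).Adj w' j ∧ w' ≠ w :=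
      fun w hw => permGraph_nbr τ j hsymmτ w hw
    -- first doubling
    have hmap1 : rootedCount (permGraph m π'') s'' =
        rootedCount ((permGraph (m+1) σ').comap
          (Subtype.val : {x : Fin (m+1) // x ≠ j'} → Fin (m+1)))
          ((finSuccAboveEquiv j') s'') := by
      apply rootedCount_map
      intro a b
      rw [hAdj1 a b]
      simp [SimpleGraph.comap_adj, finSuccAboveEquiv_apply]
    have h2le1 := two_mul_le (permGraph (m+1) σ') j' (j'.succAbove s'')
      (Fin.succAbove_ne j' s'') hne1 htwo1
    have key1 : 2 * rootedCount (permGraph m π'') s'' ≤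
        rootedCount (permGraph (m+1) σ') (j'.succAbove s'') := by
      rw [hmap1, finSuccAboveEquiv_apply]
      exact h2le1
    -- second doubling
    set y₀ : Fin (m+1) := j'.succAbove s'' with hy₀
    have hmap2 : rootedCount (permGraph (m+1) σ') y₀ =
        rootedCount ((permGraph (m+2) τ).comap
          (Subtype.val : {x : Fin (m+2) // x ≠ j} → Fin (m+2)))
          ((finSuccAboveEquiv j) y₀) := by
      apply rootedCount_map
      intro a b
      rw [hAdj2 a b]
      simp [SimpleGraph.comap_adj, finSuccAboveEquiv_apply]
    have h2le2 := two_mul_le (permGraph (m+2) τ) j (j.succAbove y₀)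
      (Fin.succAbove_ne j y₀) hne2 htwo2
    have key2 : 2 * rootedCount (permGraph (m+1) σ') y₀ ≤
        rootedCount (permGraph (m+2) τ) (j.succAbove y₀) := by
      rw [hmap2, finSuccAboveEquiv_apply]
      exact h2le2
    have hfinal : rootedCount (permGraph (m+2) τ) (j.succAbove y₀) =
        rootedCount (permGraph (m+2) τ) s := rootedCount_eq _ _ _
    omega
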